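/- Let η ∈ ℤ₂ (the 2-adic integers) with η ≡ 2 (mod 4), i.e., η = 2u with u a 2-adic unit. Then every a ∈ ℤ₂ admits a unique representation a = Σ_{i≥0} a_i η^i with all a_i ∈ {0,1}. -/

import Mathlib

namespace BaseEtaAux

/-- the first base-2 digit of a 2-adic integer -/
noncomputable def digit (a : ℤ_[2]) : ℤ_[2] := (a.appr 1 : ℤ_[2])

lemma digit_mem (a : ℤ_[2]) : digit a = 0 ∨ digit a = 1 := by
  have h : a.appr 1 < 2 := by simpa using PadicInt.appr_lt a 1
  interval_cases h' : a.appr 1 <;> simp [digit, h']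

lemma two_dvd_sub_digit (a : ℤ_[2]) : (2 : ℤ_[2]) ∣ a - digit a := by
  have := PadicInt.appr_spec 1 a
  rw [Ideal.mem_span_singleton] at this
  simpa [digit] using this

lemma norm_two : ‖(2 : ℤ_[2])‖ = 2⁻¹ := by
  have := PadicInt.norm_p (p := 2)
  simpa using this

lemma norm_sub_le (η : ℤ_[2]) (hη : (4 : ℤ_[2]) ∣ η - 2) : ‖η - 2‖ ≤ 4⁻¹ := by
  have h4 : η - 2 ∈ (Ideal.span {(2 : ℤ_[2]) ^ 2} : Ideal ℤ_[2]) := by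
    rw [Ideal.mem_span_singleton]
    have : (2 : ℤ_[2]) ^ 2 = 4 := by norm_num
    rw [this]; exact hη
  have := (PadicInt.norm_le_pow_iff_mem_span_pow (η - 2) 2).mpr h4
  have h2 : ((2 : ℕ) : ℝ) ^ (-(2 : ℕ) : ℤ) = (4 : ℝ)⁻¹ := by norm_num
  rw [h2] at this
  exact this

lemma norm_eta (η : ℤ_[2]) (hη : (4 : ℤ_[2]) ∣ η - 2) : ‖η‖ = 2⁻¹ := by
  have h1 : ‖η - 2‖ ≤ 4⁻¹ := norm_sub_le η hη
  have hne : ‖(2 : ℤ_[2])‖ ≠ ‖η - 2‖ := by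
    rw [norm_two]; intro h; rw [← h] at h1; norm_num at h1
  have : ‖(2 : ℤ_[2]) + (η - 2)‖ = max ‖(2 : ℤ_[2])‖ ‖η - 2‖ :=
    PadicInt.norm_add_eq_max_of_ne hne
  have h2 : (2 : ℤ_[2]) + (η - 2) = η := by ring
  rw [h2, norm_two] at this
  rw [this]
  exact max_eq_left (le_trans h1 (by norm_num))

lemma eta_dvd_two (η : ℤ_[2]) (hη : (4 : ℤ_[2]) ∣ η - 2) : η ∣ 2 := by
  obtain ⟨t, ht⟩ := hη
  have hηu : η = 2 * (1 + 2 * t) := by linear_combination ht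
  have hu : IsUnit (1 + 2 * t) := by
    rw [PadicInt.isUnit_iff]
    have h2t : ‖(2 : ℤ_[2]) * t‖ ≤ 2⁻¹ := by
      rw [norm_mul, norm_two]
      calc 2⁻¹ * ‖t‖ ≤ 2⁻¹ * 1 := by
            exact mul_le_mul_of_nonneg_left (PadicInt.norm_le_one t) (by norm_num)
        _ = 2⁻¹ := mul_one _
    have hne : ‖(1 : ℤ_[2])‖ ≠ ‖(2 : ℤ_[2]) * t‖ := by
      rw [norm_one]; intro h; rw [← h] at h2t; norm_num at h2t
    rw [PadicInt.norm_add_eq_max_of_ne hne, norm_one]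
    exact max_eq_left (le_trans h2t (by norm_num))
  refine ⟨(hu.unit⁻¹ : _), ?_⟩
  have : (1 + 2 * t) * (hu.unit⁻¹ : _) = 1 := by
    have h := hu.unit.mul_inv
    rwa [hu.unit_spec] at h
  calc (2 : ℤ_[2]) = 2 * ((1 + 2 * t) * (hu.unit⁻¹ : _)) := by rw [this, mul_one]
    _ = η * (hu.unit⁻¹ : _) := by rw [hηu]; ring

lemma eta_dvd_sub_digit (η : ℤ_[2]) (hη : (4 : ℤ_[2]) ∣ η - 2) (a : ℤ_[2]) :
    η ∣ a - digit a :=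
  dvd_trans (eta_dvd_two η hη) (two_dvd_sub_digit a)

/-- quotient after removing the first digit -/
noncomputable def quot (η : ℤ_[2]) (hη : (4 : ℤ_[2]) ∣ η - 2) (a : ℤ_[2]) : ℤ_[2] :=
  (eta_dvd_sub_digit η hη a).choose

lemma quot_spec (η : ℤ_[2]) (hη : (4 : ℤ_[2]) ∣ η - 2) (a : ℤ_[2]) :
    η * quot η hη a = a - digit a :=
  (eta_dvd_sub_digit η hη a).choose_spec.symm

/-- iterated quotients -/
noncomputable def rem (η : ℤ_[2]) (hη : (4 : ℤ_[2]) ∣ η - 2) (a : ℤ_[2]) (n : ℕ) : ℤ_[2] :=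
  (quot η hη)^[n] a

lemma rem_zero (η : ℤ_[2]) (hη : (4 : ℤ_[2]) ∣ η - 2) (a : ℤ_[2]) : rem η hη a 0 = a := rfl

lemma rem_succ (η : ℤ_[2]) (hη : (4 : ℤ_[2]) ∣ η - 2) (a : ℤ_[2]) (n : ℕ) :
    rem η hη a (n + 1) = quot η hη (rem η hη a n) :=
  Function.iterate_succ_apply' _ _ _

lemma key_invariant (η : ℤ_[2]) (hη : (4 : ℤ_[2]) ∣ η - 2) (a : ℤ_[2]) (n : ℕ) :
    a = (∑ i ∈ Finset.range n, digit (rem η hη a i) * η ^ i) + η ^ n * rem η hη a n := by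
  induction n with
  | zero => simp [rem_zero]
  | succ n ih =>
      rw [Finset.sum_range_succ, rem_succ]
      have h := quot_spec η hη (rem η hη a n)
      calc a = (∑ i ∈ Finset.range n, digit (rem η hη a i) * η ^ i)
              + η ^ n * rem η hη a n := ih
        _ = (∑ i ∈ Finset.range n, digit (rem η hη a i) * η ^ i) + digit (rem η hη a n) * η ^ n
              + η ^ (n + 1) * quot η hη (rem η hη a n) := by
            rw [pow_succ]
            linear_combination (η ^ n) * h.symm

lemma summable_digits (η : ℤ_[2]) (hη : (4 : ℤ_[2]) ∣ η - 2) (c : ℕ → ℤ_[2]) :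
    Summable (fun i => c i * η ^ i) := by
  refine Summable.of_norm_bounded (g := fun i => (2⁻¹ : ℝ) ^ i)
    (summable_geometric_of_lt_one (by norm_num) (by norm_num)) (fun i => ?_)
  rw [norm_mul, norm_pow, norm_eta η hη]
  calc ‖c i‖ * (2⁻¹ : ℝ) ^ i ≤ 1 * (2⁻¹ : ℝ) ^ i := by
        exact mul_le_mul_of_nonneg_right (PadicInt.norm_le_one _) (by positivity)
    _ = (2⁻¹ : ℝ) ^ i := one_mul _

/-- key uniqueness lemma: a zero sum with "rigid" digits has all digits zero. -/
lemma digits_eq_zero (η : ℤ_[2]) (hη : (4 : ℤ_[2]) ∣ η - 2) (c : ℕ → ℤ_[2])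
    (hc : ∀ i, (2 : ℤ_[2]) ∣ c i → c i = 0)
    (hsum : ∑' i, c i * η ^ i = 0) : ∀ i, c i = 0 := by
  have hηne : η ≠ 0 := by
    intro h
    have := norm_eta η hη
    rw [h, norm_zero] at this; norm_num at this
  intro n
  induction n using Nat.strong_induction_on with
  | _ n ih =>
    have hS : Summable (fun i => c i * η ^ i) := summable_digits η hη c
    have hsplit := (Summable.sum_add_tsum_nat_add n hS).symm
    rw [hsum] at hsplit
    have hzero : (∑ i ∈ Finset.range n, c i * η ^ i) = 0 := by
      apply Finset.sum_eq_zero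
      intro i hi
      rw [ih i (Finset.mem_range.mp hi), zero_mul]
    rw [hzero, zero_add] at hsplit
    -- hsplit : ∑' i, c (i + n) * η ^ (i + n) = 0
    have hfac : ∀ i : ℕ, c (i + n) * η ^ (i + n) = η ^ n * (c (i + n) * η ^ i) := by
      intro i; rw [pow_add]; ring
    rw [tsum_congr hfac] at hsplit
    have hS2 : Summable (fun i => c (i + n) * η ^ i) :=
      summable_digits η hη (fun i => c (i + n))
    rw [hS2.tsum_mul_left (η ^ n)] at hsplit
    have hT : (∑' i, c (i + n) * η ^ i) = 0 :=
      (mul_eq_zero.mp hsplit.symm).resolve_left (pow_ne_zero n hηne)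
    have hsplit2 := (Summable.sum_add_tsum_nat_add 1 hS2).symm
    rw [hT] at hsplit2
    rw [Finset.sum_range_one] at hsplit2
    simp only [zero_add, pow_zero, mul_one] at hsplit2
    -- hsplit2 : c n + ∑' i, c (i + 1 + n) * η ^ (i + 1) = 0
    have hfac2 : ∀ i : ℕ, c (i + 1 + n) * η ^ (i + 1) = η * (c (i + 1 + n) * η ^ i) := by
      intro i; rw [pow_succ]; ring
    rw [tsum_congr hfac2] at hsplit2
    have hS3 : Summable (fun i => c (i + 1 + n) * η ^ i) :=
      summable_digits η hη (fun i => c (i + 1 + n))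
    rw [hS3.tsum_mul_left η] at hsplit2
    have h2η : (2 : ℤ_[2]) ∣ η := by
      obtain ⟨t, ht⟩ := hη
      exact ⟨1 + 2 * t, by linear_combination ht⟩
    apply hc n
    have : c n = -(η * ∑' i, c (i + 1 + n) * η ^ i) := by linear_combination -hsplit2
    rw [this]
    exact dvd_neg.mpr (h2η.mul_right _)

lemma not_two_dvd_one : ¬ (2 : ℤ_[2]) ∣ 1 := by
  intro h
  have h' : ((2 : ℕ) : ℤ_[2]) ∣ 1 := by exact_mod_cast h
  have := (PadicInt.norm_lt_one_iff_dvd (1 : ℤ_[2])).mpr h'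
  rw [norm_one] at this
  norm_num at this

lemma rep_eq (η : ℤ_[2]) (hη : (4 : ℤ_[2]) ∣ η - 2) (a : ℤ_[2]) :
    a = ∑' i, digit (rem η hη a i) * η ^ i := by
  have hS : Summable (fun i => digit (rem η hη a i) * η ^ i) :=
    summable_digits η hη _
  have h1 : Filter.Tendsto (fun n => ∑ i ∈ Finset.range n, digit (rem η hη a i) * η ^ i)
      Filter.atTop (nhds (∑' i, digit (rem η hη a i) * η ^ i)) := hS.hasSum.tendsto_sum_nat
  have h2 : Filter.Tendsto (fun n => ∑ i ∈ Finset.range n, digit (rem η hη a i) * η ^ i)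
      Filter.atTop (nhds a) := by
    have heq : (fun n => ∑ i ∈ Finset.range n, digit (rem η hη a i) * η ^ i)
        = fun n => a - η ^ n * rem η hη a n := by
      funext n
      linear_combination -key_invariant η hη a n
    rw [heq]
    have h0 : Filter.Tendsto (fun n : ℕ => η ^ n * rem η hη a n) Filter.atTop (nhds 0) := by
      apply squeeze_zero_norm (a := fun n : ℕ => (2⁻¹ : ℝ) ^ n)
      · intro n
        rw [norm_mul, norm_pow, norm_eta η hη]
        calc (2⁻¹ : ℝ) ^ n * ‖rem η hη a n‖ ≤ (2⁻¹ : ℝ) ^ n * 1 :=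
              mul_le_mul_of_nonneg_left (PadicInt.norm_le_one _) (by positivity)
          _ = (2⁻¹ : ℝ) ^ n := mul_one _
      · exact tendsto_pow_atTop_nhds_zero_of_lt_one (by norm_num) (by norm_num)
    have := Filter.Tendsto.sub (tendsto_const_nhds (x := a)) h0
    simpa using this
  exact tendsto_nhds_unique h2 h1

end BaseEtaAux

open BaseEtaAux in
/-- if `η ∈ ℤ₂` satisfies `η ≡ 2 (mod 4)`, then every `a ∈ ℤ₂` has a unique
base-`η` representation `a = Σ_{i≥0} a_i η^i` with digits `a_i ∈ {0,1}`. -/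
theorem unique_base_eta_representation (η : ℤ_[2]) (hη : (4 : ℤ_[2]) ∣ (η - 2))
    (a : ℤ_[2]) :
    ∃! c : ℕ → ℤ_[2], (∀ i, c i = 0 ∨ c i = 1) ∧ a = ∑' i, c i * η ^ i := by
  refine ⟨fun n => digit (rem η hη a n), ⟨fun i => digit_mem _, rep_eq η hη a⟩, ?_⟩
  rintro d ⟨hd01, hdsum⟩
  funext n
  have hSd : Summable (fun i => d i * η ^ i) := summable_digits η hη d
  have hSc : Summable (fun i => digit (rem η hη a i) * η ^ i) := summable_digits η hη _
  have hzero : ∑' i, (d i - digit (rem η hη a i)) * η ^ i = 0 := by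
    have hfac : ∀ i : ℕ, (d i - digit (rem η hη a i)) * η ^ i
        = d i * η ^ i - digit (rem η hη a i) * η ^ i := fun i => by ring
    rw [tsum_congr hfac, Summable.tsum_sub hSd hSc, ← hdsum, ← rep_eq η hη a, sub_self]
  have hrigid : ∀ i, (2 : ℤ_[2]) ∣ d i - digit (rem η hη a i)
      → d i - digit (rem η hη a i) = 0 := by
    intro i hdvd
    rcases hd01 i with h1 | h1 <;> rcases digit_mem (rem η hη a i) with h2 | h2 <;>
        rw [h1, h2] at hdvd ⊢
    · simp
    · rw [zero_sub] at hdvd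
      exact absurd (dvd_neg.mp hdvd) not_two_dvd_one
    · rw [sub_zero] at hdvd
      exact absurd hdvd not_two_dvd_one
    · simp
  have h := digits_eq_zero η hη (fun i => d i - digit (rem η hη a i)) hrigid hzero n
  exact sub_eq_zero.mp h
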